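/- If L is a linear order with dense condensation and with no infinite strongly η-like interval, then every infinite interval of L contains blocks of arbitrarily large finite size: for every k there is a block of size at least k contained in the interval. -/

import Mathlib

open Set

/-- The block relation: `x` and `y` are finitely far apart. -/
def Blk {L : Type*} [LinearOrder L] (x y : L) : Prop := (Set.uIcc x y).Finite

/-- The condensation of `L` restricted to the interval `I` is dense. -/
def DenseCondOn {L : Type*} [LinearOrder L] (I : Set L) : Prop :=
  ∀ x ∈ I, ∀ y ∈ I, x < y → ¬ Blk x y →
    ∃ z ∈ I, x < z ∧ z < y ∧ ¬ Blk x z ∧ ¬ Blk z y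

/-- `I` is a strongly η-like interval: convex, dense condensation, and a
uniform finite bound on block sizes. -/
def StronglyEtaLike {L : Type*} [LinearOrder L] (I : Set L) : Prop :=
  I.OrdConnected ∧ DenseCondOn I ∧
    ∃ k : ℕ, ∀ x ∈ I, ({y ∈ I | Blk x y}).Finite ∧ ({y ∈ I | Blk x y}).ncard < k

/-- If L has dense condensation and no infinite strongly η-like interval, then
every infinite interval contains blocks of arbitrarily large size. -/
theorem arbitrarily_large_blocks {L : Type*} [LinearOrder L]
    (hdense : DenseCondOn (Set.univ : Set L))
    (hno : ¬ ∃ I : Set L, I.Infinite ∧ StronglyEtaLike I) :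
    ∀ I : Set L, I.OrdConnected → I.Infinite → ∀ k : ℕ,
      ∃ x ∈ I, k ≤ ({y ∈ I | Blk x y}).ncard ∨ ({y ∈ I | Blk x y}).Infinite := by
  intro I hconv hinf k
  by_contra h
  push_neg at h
  apply hno
  refine ⟨I, hinf, hconv, ?_, k, ?_⟩
  · intro x hx y hy hxy hblk
    obtain ⟨z, _, hxz, hzy, h1, h2⟩ := hdense x trivial y trivial hxy hblk
    exact ⟨z, hconv.out hx hy ⟨hxz.le, hzy.le⟩, hxz, hzy, h1, h2⟩
  · intro x hx
    obtain ⟨h1, h2⟩ := h x hx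
    exact ⟨h2, h1⟩
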